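/- arXiv:1305.4610 — 2 statements merged into one kernel-verified Lean document; each statement's English description precedes it below -/
import Mathlib

section
/- Let α_{ij} ≥ 0 for all i,j ∈ {1,...,K}. Define, for each subset S ⊆ {1,...,K}, P_S as the set of tuples (d_1,...,d_K) with d_i = 0 for i ∈ S, 0 ≤ d_j ≤ α_{jj} for j ∉ S, and ∑_{j=1}^m d_{i_j} ≤ ∑_{j=1}^m (α_{i_j i_j} − α_{i_{j-1} i_j}) for every cyclic sequence of distinct indices in S^c. Define the TIN region P* as the set of tuples (d_1,...,d_K) such that there exist r_i ∈ [−∞, 0] with d_i = max{0, α_{ii} + r_i − max{0, max_{j≠i}(α_{ij} + r_j)}} for all i (with the convention that r_i = −∞ gives user i zero power, d_i = 0, and P^{r_i} = 0). Then P* = ⋃_{S ⊆ {1,...,K}} P_S. -/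
/-- Cyclic predecessor in `Fin m`. -/
def cprev {m : ℕ} (j : Fin m) : Fin m := ⟨(j.1 + m - 1) % m, Nat.mod_lt _ j.pos⟩

/-- The polyhedral TIN region with the users in `S` silenced. -/
def PS (K : ℕ) (α : Fin K → Fin K → ℝ) (S : Set (Fin K)) : Set (Fin K → ℝ) :=
  {d : Fin K → ℝ |
    (∀ i ∈ S, d i = 0) ∧
    (∀ j ∉ S, 0 ≤ d j ∧ d j ≤ α j j) ∧
    ∀ m : ℕ, 2 ≤ m → ∀ i : Fin m → Fin K, Function.Injective i →
      (∀ j, i j ∉ S) →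
      ∑ j : Fin m, d (i j) ≤ ∑ j : Fin m, (α (i j) (i j) - α (i (cprev j)) (i j))}

/-- The TIN region: GDoF tuples achievable by power control (extended-real power
exponents `r i ∈ [-∞, 0]`, with `r i = -∞` meaning user `i` is silent) and
treating interference as noise. -/
noncomputable def TINregion (K : ℕ) (α : Fin K → Fin K → ℝ) : Set (Fin K → ℝ) :=
  {d : Fin K → ℝ | ∃ r : Fin K → EReal,
    (∀ i, r i ≤ 0) ∧
    ∀ i, (d i : EReal) =
      max 0 (((α i i : EReal) + r i) -
        max 0 (⨆ j : {j : Fin K // j ≠ i}, ((α i j.1 : EReal) + r j.1)))}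




def cnext {m : ℕ} (j : Fin m) : Fin m := ⟨(j.1 + 1) % m, Nat.mod_lt _ j.pos⟩

lemma cprev_cnext {m : ℕ} (j : Fin m) : cprev (cnext j) = j := by
  have hj := j.2
  apply Fin.ext
  show ((j.1 + 1) % m + m - 1) % m = j.1
  rcases Nat.lt_or_ge (j.1 + 1) m with h | h
  · rw [Nat.mod_eq_of_lt h]
    have : j.1 + 1 + m - 1 = j.1 + m := by omega
    rw [this, Nat.add_mod_right, Nat.mod_eq_of_lt hj]
  · have hjm : j.1 + 1 = m := by omega
    rw [hjm, Nat.mod_self]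
    have : 0 + m - 1 = j.1 := by omega
    rw [this, Nat.mod_eq_of_lt hj]

lemma cnext_cprev {m : ℕ} (j : Fin m) : cnext (cprev j) = j := by
  have hj := j.2
  apply Fin.ext
  show ((j.1 + m - 1) % m + 1) % m = j.1
  rcases Nat.eq_zero_or_pos j.1 with h0 | h0
  · rw [h0]
    have e1 : 0 + m - 1 = m - 1 := by omega
    rw [e1, Nat.mod_eq_of_lt (show m - 1 < m by omega)]
    have e2 : m - 1 + 1 = m := by omega
    rw [e2, Nat.mod_self]
  · have e1 : j.1 + m - 1 = (j.1 - 1) + m := by omega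
    rw [e1, Nat.add_mod_right, Nat.mod_eq_of_lt (show j.1 - 1 < m by omega)]
    have e2 : j.1 - 1 + 1 = j.1 := by omega
    rw [e2, Nat.mod_eq_of_lt hj]

lemma cnext_ne {m : ℕ} (hm : 2 ≤ m) (j : Fin m) : cnext j ≠ j := by
  have hj := j.2
  intro h
  have h' := congrArg Fin.val h
  simp only [cnext] at h'
  rcases Nat.lt_or_ge (j.1 + 1) m with h2 | h2
  · rw [Nat.mod_eq_of_lt h2] at h'; omega
  · have : j.1 + 1 = m := by omega
    rw [this, Nat.mod_self] at h'; omega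

lemma cprev_zero {n : ℕ} : cprev (0 : Fin (n + 1)) = Fin.last n := by
  apply Fin.ext
  show (0 + (n + 1) - 1) % (n + 1) = n
  have : 0 + (n + 1) - 1 = n := by omega
  rw [this, Nat.mod_eq_of_lt (by omega)]

lemma cprev_succ {n : ℕ} (j : Fin n) : cprev (Fin.succ j) = Fin.castSucc j := by
  apply Fin.ext
  show (j.1 + 1 + (n + 1) - 1) % (n + 1) = j.1
  have : j.1 + 1 + (n + 1) - 1 = j.1 + (n + 1) := by omega
  rw [this, Nat.add_mod_right, Nat.mod_eq_of_lt (by omega)]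


namespace TINaux

variable {K : ℕ} (α : Fin K → Fin K → ℝ) (d : Fin K → ℝ)

/-- Weight of a walk. -/
def W : List (Fin K) → ℝ
  | [] => 0
  | [a] => d a - α a a
  | a :: b :: l => d a - α a a + α a b + W (b :: l)

lemma W_single (a : Fin K) : W α d [a] = d a - α a a := rfl

lemma W_cons (a : Fin K) (l : List (Fin K)) (h : l ≠ []) :
    W α d (a :: l) = d a - α a a + α a (l.head h) + W α d l := by
  cases l with
  | nil => simp at h
  | cons b t => rfl

lemma W_append (p s : List (Fin K)) (hp : p ≠ []) (hs : s ≠ []) :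
    W α d (p ++ s) = W α d p + α (p.getLast hp) (s.head hs) + W α d s := by
  induction p with
  | nil => simp at hp
  | cons a p ih =>
    cases p with
    | nil =>
      rw [List.singleton_append, W_cons α d a s hs, W_single]
      simp [List.getLast]
    | cons b t =>
      have hbt : (b :: t : List (Fin K)) ≠ [] := by simp
      have h1 : W α d (a :: ((b :: t) ++ s)) = d a - α a a + α a b + W α d ((b :: t) ++ s) := rfl
      have h2 : W α d (a :: b :: t) = d a - α a a + α a b + W α d (b :: t) := rfl
      rw [List.cons_append, h1, ih hbt, h2]
      have : (a :: b :: t).getLast (by simp) = (b :: t).getLast hbt := by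
        simp [List.getLast_cons]
      rw [this]
      ring

/-- Open-path formula for `W` as sums over indices. -/
lemma W_eq_sum : ∀ (c : List (Fin K)) (_ : c ≠ []),
    W α d c = (∑ j : Fin c.length, (d (c.get j) - α (c.get j) (c.get j)))
      + ∑ j : Fin (c.length - 1),
          α (c.get ⟨j.1, by omega⟩) (c.get ⟨j.1 + 1, by omega⟩)
  | [], h => by simp at h
  | [a], _ => by
    simp [W_single]
  | a :: b :: t, _ => by
    have ih := W_eq_sum (b :: t) (by simp)
    have h1 : W α d (a :: b :: t) = d a - α a a + α a b + W α d (b :: t) := rfl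
    rw [h1, ih]
    have hlen : (a :: b :: t).length = (b :: t).length + 1 := rfl
    rw [show (∑ j : Fin (a :: b :: t).length,
          (d ((a :: b :: t).get j) - α ((a :: b :: t).get j) ((a :: b :: t).get j)))
        = (d a - α a a) + ∑ j : Fin (b :: t).length,
            (d ((b :: t).get j) - α ((b :: t).get j) ((b :: t).get j)) from by
      refine (Fin.sum_univ_succ _).trans ?_
      simp]
    rw [show (∑ j : Fin ((a :: b :: t).length - 1),
          α ((a :: b :: t).get ⟨j.1, by omega⟩) ((a :: b :: t).get ⟨j.1 + 1, by omega⟩))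
        = α a b + ∑ j : Fin ((b :: t).length - 1),
            α ((b :: t).get ⟨j.1, by omega⟩) ((b :: t).get ⟨j.1 + 1, by omega⟩) from by
      refine (Fin.sum_univ_succ _).trans ?_
      simp [List.get_eq_getElem]]
    ring


/-- The cyclic cross-term sum splits into wrap term plus open edge sum. -/
lemma cross_sum (c : List (Fin K)) (hne : c ≠ []) :
    (∑ j : Fin c.length, α (c.get (cprev j)) (c.get j))
      = α (c.getLast hne) (c.head hne)
        + ∑ j : Fin (c.length - 1), α (c.get ⟨j.1, by omega⟩) (c.get ⟨j.1 + 1, by omega⟩) := by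
  cases c with
  | nil => simp at hne
  | cons a t =>
    refine (Fin.sum_univ_succ _).trans ?_
    congr 1
    · rw [cprev_zero]
      rw [List.getLast_eq_getElem, List.head_eq_getElem_zero]
      simp [List.get_eq_getElem, Fin.last]
    · refine Finset.sum_congr rfl fun j _ => ?_
      rw [cprev_succ]
      simp [List.get_eq_getElem]


variable {S : Set (Fin K)}

lemma cycle_nonpos (hd : d ∈ PS K α S) (c : List (Fin K)) (hc : c.Nodup)
    (hlen : 2 ≤ c.length) (hT : ∀ a ∈ c, 0 < d a) (hne : c ≠ []) :
    W α d c + α (c.getLast hne) (c.head hne) ≤ 0 := by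
  obtain ⟨h1, h2, h3⟩ := hd
  have hnotS : ∀ a ∈ c, a ∉ S := fun a ha hS => absurd (h1 a hS) (ne_of_gt (hT a ha))
  have key := h3 c.length hlen c.get (List.nodup_iff_injective_get.mp hc)
    (fun j => hnotS _ (List.get_mem c j))
  rw [W_eq_sum α d c hne]
  have hs1 : (∑ j : Fin c.length, (d (c.get j) - α (c.get j) (c.get j)))
      = (∑ j : Fin c.length, d (c.get j)) - ∑ j : Fin c.length, α (c.get j) (c.get j) :=
    Finset.sum_sub_distrib _ _
  have hs2 : (∑ j : Fin c.length, (α (c.get j) (c.get j) - α (c.get (cprev j)) (c.get j)))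
      = (∑ j : Fin c.length, α (c.get j) (c.get j))
        - ∑ j : Fin c.length, α (c.get (cprev j)) (c.get j) :=
    Finset.sum_sub_distrib _ _
  rw [hs2, cross_sum α c hne] at key
  rw [hs1]
  linarith

lemma W_nonpos (hd : d ∈ PS K α S) (hα : ∀ i j, 0 ≤ α i j) :
    ∀ l : List (Fin K), l.Nodup → (∀ a ∈ l, 0 < d a) → W α d l ≤ 0 := by
  intro l hnd hpos
  match l with
  | [] => exact le_refl 0
  | [a] =>
    have haS : a ∉ S := fun hS => absurd (hd.1 a hS) (ne_of_gt (hpos a (by simp)))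
    have := (hd.2.1 a haS).2
    rw [W_single]; linarith
  | a :: b :: t =>
    have h := cycle_nonpos α d hd (a :: b :: t) hnd (by simp) hpos (by simp)
    have := hα ((a :: b :: t).getLast (by simp)) ((a :: b :: t).head (by simp))
    linarith

/-- Simple paths through users with positive GDoF, starting at `i`. -/
def pset (i : Fin K) : Set (List (Fin K)) :=
  {l | l.Nodup ∧ (∀ a ∈ l, 0 < d a) ∧ l.head? = some i}

/-- The potential function: max weight over simple paths starting at `i`. -/
noncomputable def xv (i : Fin K) : ℝ := sSup (W α d '' pset d i)

lemma pset_finite (i : Fin K) : (W α d '' pset d i).Finite := by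
  refine Set.Finite.image _ (Set.Finite.subset (List.finite_length_le (Fin K) K) ?_)
  intro l hl
  simpa using hl.1.length_le_card

lemma pset_bdd (hd : d ∈ PS K α S) (hα : ∀ i j, 0 ≤ α i j) {i : Fin K} :
    ∀ y ∈ W α d '' pset d i, y ≤ 0 := by
  rintro y ⟨l, hl, rfl⟩
  exact W_nonpos α d hd hα l hl.1 hl.2.1

lemma single_mem_pset {i : Fin K} (hi : 0 < d i) : [i] ∈ pset d i :=
  ⟨List.nodup_singleton i, by simpa using hi, rfl⟩

lemma le_xv (hd : d ∈ PS K α S) (hα : ∀ i j, 0 ≤ α i j) {i : Fin K} {l : List (Fin K)}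
    (hl : l ∈ pset d i) : W α d l ≤ xv α d i :=
  le_csSup ⟨0, fun y hy => pset_bdd α d hd hα y hy⟩ (Set.mem_image_of_mem _ hl)

lemma xv_nonpos (hd : d ∈ PS K α S) (hα : ∀ i j, 0 ≤ α i j) {i : Fin K} (hi : 0 < d i) :
    xv α d i ≤ 0 :=
  csSup_le ⟨_, Set.mem_image_of_mem _ (single_mem_pset d hi)⟩ (pset_bdd α d hd hα)

lemma xv_mem {i : Fin K} (hi : 0 < d i) : xv α d i ∈ W α d '' pset d i :=
  Set.Nonempty.csSup_mem ⟨_, Set.mem_image_of_mem _ (single_mem_pset d hi)⟩ (pset_finite α d i)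

lemma xv_ge_single (hd : d ∈ PS K α S) (hα : ∀ i j, 0 ≤ α i j) {i : Fin K} (hi : 0 < d i) :
    d i - α i i ≤ xv α d i :=
  le_xv α d hd hα (single_mem_pset d hi)


lemma exists_dup {β : Type*} : ∀ {l : List β}, ¬ l.Nodup →
    ∃ (x : List β) (a : β) (y z : List β), l = x ++ a :: (y ++ a :: z) := by
  intro l
  induction l with
  | nil => intro h; exact absurd List.nodup_nil h
  | cons b t ih =>
    intro h
    by_cases hb : b ∈ t
    · obtain ⟨y, z, rfl⟩ := List.append_of_mem hb
      exact ⟨[], b, y, z, rfl⟩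
    · have ht : ¬ t.Nodup := fun hnd => h (List.nodup_cons.mpr ⟨hb, hnd⟩)
      obtain ⟨x, a, y, z, rfl⟩ := ih ht
      exact ⟨b :: x, a, y, z, rfl⟩

lemma nodup_cycle_decomp {β : Type*} : ∀ (n : ℕ) (l : List β), l.length ≤ n →
    (∃ (x : List β) (a : β) (y z : List β), l = x ++ a :: (y ++ a :: z)) →
    ∃ (u : List β) (a : β) (v w : List β), l = u ++ (a :: v) ++ a :: w ∧ (a :: v).Nodup := by
  intro n
  induction n with
  | zero =>
    rintro l hl ⟨x, a, y, z, rfl⟩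
    simp at hl
  | succ n ih =>
    rintro l hl ⟨x, a, y, z, rfl⟩
    by_cases hnd : (a :: y).Nodup
    · exact ⟨x, a, y, z, by simp, hnd⟩
    · obtain ⟨x', c, y', z', he⟩ := exists_dup hnd
      -- a :: y = x' ++ c :: (y' ++ c :: z')
      have hlen : (c :: (y' ++ c :: z') : List β).length ≤ n := by
        have h1 : (a :: y).length = (x' ++ (c :: (y' ++ c :: z'))).length := by rw [he]
        have h2 : (x ++ a :: (y ++ a :: z)).length ≤ n + 1 := hl
        simp at h1 h2 ⊢
        omega
      obtain ⟨u, cc, v, w, hdec, hnd2⟩ := ih (c :: (y' ++ c :: z')) hlen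
        ⟨[], c, y', z', by simp⟩
      refine ⟨x ++ x' ++ u, cc, v, w ++ a :: z, ?_, hnd2⟩
      have hl2 : x ++ a :: (y ++ a :: z) = x ++ ((a :: y) ++ (a :: z)) := by simp
      rw [hl2, he, hdec]
      simp


lemma splice_le (hd : d ∈ PS K α S) (hα : ∀ i j, 0 ≤ α i j) (a : Fin K) (v w : List (Fin K))
    (hv : v ≠ []) (hnd : (a :: v).Nodup) (hpos : ∀ b ∈ a :: v, 0 < d b) :
    W α d ((a :: v) ++ a :: w) ≤ W α d (a :: w) := by
  rw [W_append α d (a :: v) (a :: w) (by simp) (by simp)]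
  have hcyc := cycle_nonpos α d hd (a :: v) hnd
    (by simp only [List.length_cons]; have := List.length_pos_iff.mpr hv; omega) hpos (by simp)
  have hh : (a :: v).head (by simp) = a := rfl
  have hh2 : (a :: w).head (by simp) = a := rfl
  rw [hh] at hcyc
  rw [hh2]
  linarith

lemma splice_le' (hd : d ∈ PS K α S) (hα : ∀ i j, 0 ≤ α i j) (u : List (Fin K)) (a : Fin K)
    (v w : List (Fin K)) (hv : v ≠ []) (hnd : (a :: v).Nodup)
    (hpos : ∀ b ∈ a :: v, 0 < d b) :
    W α d (u ++ (a :: v) ++ a :: w) ≤ W α d (u ++ a :: w) := by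
  cases u with
  | nil => simpa using splice_le α d hd hα a v w hv hnd hpos
  | cons b u' =>
    have h1 : ((a :: v) ++ a :: w : List (Fin K)) ≠ [] := by simp
    have h2 : (a :: w : List (Fin K)) ≠ [] := by simp
    have h3 : (b :: u' : List (Fin K)) ≠ [] := by simp
    rw [List.append_assoc, W_append α d (b :: u') ((a :: v) ++ a :: w) h3 h1,
      W_append α d (b :: u') (a :: w) h3 h2]
    have hx : ((a :: v) ++ a :: w).head h1 = (a :: w).head h2 := rfl
    rw [hx]
    have := splice_le α d hd hα a v w hv hnd hpos
    linarith

lemma walk_le (hd : d ∈ PS K α S) (hα : ∀ i j, 0 ≤ α i j) :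
    ∀ (n : ℕ) (l : List (Fin K)), l.length ≤ n → l.Chain' (· ≠ ·) →
      (∀ a ∈ l, 0 < d a) → ∀ i : Fin K, l.head? = some i → W α d l ≤ xv α d i := by
  intro n
  induction n with
  | zero =>
    intro l hl _ _ i hhead
    rw [List.length_eq_zero_iff.mp (Nat.le_zero.mp hl)] at hhead
    simp at hhead
  | succ n ih =>
    intro l hl hchain hpos i hhead
    by_cases hnd : l.Nodup
    · exact le_xv α d hd hα ⟨hnd, hpos, hhead⟩
    · obtain ⟨u, a, v, w, hdec, hnd2⟩ :=
        nodup_cycle_decomp l.length l le_rfl (exists_dup hnd)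
      have hchain' : List.Chain' (· ≠ ·) (u ++ ((a :: v) ++ a :: w)) := by
        rw [← List.append_assoc, ← hdec]; exact hchain
      have hcr : List.Chain' (· ≠ ·) ((a :: v) ++ a :: w) := hchain'.right_of_append
      have hv : v ≠ [] := by
        rintro rfl
        have : List.Chain' (· ≠ ·) (a :: a :: w) := by simpa using hcr
        exact (List.isChain_cons_cons.mp this).1 rfl
      have hposav : ∀ b ∈ a :: v, 0 < d b := by
        intro b hb
        refine hpos b ?_
        rw [hdec]; simp at hb ⊢; tauto
      -- the shortened walk
      have hposl' : ∀ b ∈ u ++ a :: w, 0 < d b := by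
        intro b hb
        refine hpos b ?_
        rw [hdec]; simp at hb ⊢; tauto
      have hchainl' : List.Chain' (· ≠ ·) (u ++ a :: w) := by
        unfold List.Chain' at hchain' ⊢
        rw [List.isChain_append] at hchain' ⊢
        obtain ⟨c1, c2, c3⟩ := hchain'
        refine ⟨c1, c2.right_of_append, ?_⟩
        simpa using c3
      have hheadl' : (u ++ a :: w).head? = some i := by
        cases u with
        | nil =>
          rw [hdec] at hhead
          simpa using hhead
        | cons b u' => simpa using (by rw [hdec] at hhead; simpa using hhead : b = i)
      have hlen' : (u ++ a :: w).length ≤ n := by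
        have h1 : l.length = (u ++ (a :: v) ++ a :: w).length := by rw [hdec]
        have h2 : v.length ≠ 0 := fun h => hv (List.length_eq_zero_iff.mp h)
        simp at h1 ⊢
        omega
      calc W α d l = W α d (u ++ (a :: v) ++ a :: w) := by rw [hdec]
        _ ≤ W α d (u ++ a :: w) := splice_le' α d hd hα u a v w hv hnd2 hposav
        _ ≤ xv α d i := ih _ hlen' hchainl' hposl' i hheadl'


lemma xv_step (hd : d ∈ PS K α S) (hα : ∀ i j, 0 ≤ α i j) {i j : Fin K}
    (hi : 0 < d i) (hj : 0 < d j) (hij : j ≠ i) :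
    d i - α i i + α i j + xv α d j ≤ xv α d i := by
  obtain ⟨l, ⟨hnd, hpos, hhead⟩, hWl⟩ := xv_mem α d hj
  have hne : l ≠ [] := by rintro rfl; simp at hhead
  have hheadval : l.head hne = j := by
    have := List.head?_eq_head hne
    rw [hhead] at this
    exact (Option.some.inj this).symm
  have hchain : List.Chain' (· ≠ ·) (i :: l) := by
    unfold List.Chain'
    rw [List.isChain_cons]
    refine ⟨?_, hnd.isChain⟩
    intro y hy
    rw [hhead] at hy
    rw [Option.mem_some_iff] at hy
    rw [← hy]
    exact Ne.symm hij
  have hposil : ∀ a ∈ i :: l, 0 < d a := by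
    intro a ha
    rcases List.mem_cons.mp ha with rfl | ha
    · exact hi
    · exact hpos a ha
  have hW : W α d (i :: l) = d i - α i i + α i (l.head hne) + W α d l := W_cons α d i l hne
  have hwalk := walk_le α d hd hα (i :: l).length (i :: l) le_rfl hchain hposil i rfl
  rw [hW, hheadval, hWl] at hwalk
  linarith

lemma xv_attain (hd : d ∈ PS K α S) (hα : ∀ i j, 0 ≤ α i j) {i : Fin K} (hi : 0 < d i) :
    xv α d i = d i - α i i ∨
      ∃ j : Fin K, 0 < d j ∧ j ≠ i ∧ xv α d i ≤ d i - α i i + α i j + xv α d j := by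
  obtain ⟨l, ⟨hnd, hpos, hhead⟩, hWl⟩ := xv_mem α d hi
  cases l with
  | nil => simp at hhead
  | cons b t =>
    have hb : b = i := by simpa using hhead
    subst hb
    cases t with
    | nil =>
      left; rw [← hWl]; rfl
    | cons c t' =>
      right
      refine ⟨c, hpos c (by simp), ?_, ?_⟩
      · have : b ∉ c :: t' := (List.nodup_cons.mp hnd).1
        intro h; exact this (h ▸ List.mem_cons_self)
      · have hmem : (c :: t') ∈ pset d c :=
          ⟨(List.nodup_cons.mp hnd).2, fun a ha => hpos a (List.mem_cons_of_mem _ ha), rfl⟩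
        have hle := le_xv α d hd hα hmem
        have hW : W α d (b :: c :: t') = d b - α b b + α b c + W α d (c :: t') := rfl
        rw [← hWl, hW]
        linarith


lemma PS_subset_TIN (hα : ∀ i j, 0 ≤ α i j) (hd : d ∈ PS K α S) :
    ∃ r : Fin K → EReal,
      (∀ i, r i ≤ 0) ∧
      ∀ i, (d i : EReal) =
        max 0 (((α i i : EReal) + r i) -
          max 0 (⨆ j : {j : Fin K // j ≠ i}, ((α i j.1 : EReal) + r j.1))) := by
  classical
  set r : Fin K → EReal := fun i => if 0 < d i then ((xv α d i : ℝ) : EReal) else ⊥ with hr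
  refine ⟨r, ?_, ?_⟩
  · intro i
    by_cases hi : 0 < d i
    · simp only [hr, if_pos hi]
      exact_mod_cast EReal.coe_le_coe_iff.mpr (xv_nonpos α d hd hα hi)
    · simp only [hr, if_neg hi]
      exact bot_le
  · intro i
    by_cases hi : 0 < d i
    · -- positive GDoF user
      have hri : r i = ((xv α d i : ℝ) : EReal) := by simp only [hr, if_pos hi]
      set m : ℝ := xv α d i - d i + α i i with hm
      have hB : max 0 (⨆ j : {j : Fin K // j ≠ i}, ((α i j.1 : EReal) + r j.1))
          = ((m : ℝ) : EReal) := by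
        apply le_antisymm
        · apply max_le
          · exact EReal.coe_nonneg.mpr (by
              have := xv_ge_single α d hd hα hi; rw [hm]; linarith)
          · apply iSup_le
            rintro ⟨j, hji⟩
            by_cases hj : 0 < d j
            · have hrj : r j = ((xv α d j : ℝ) : EReal) := by simp only [hr, if_pos hj]
              rw [hrj, ← EReal.coe_add]
              apply EReal.coe_le_coe_iff.mpr
              have := xv_step α d hd hα hi hj hji
              rw [hm]; linarith
            · have hrj : r j = (⊥ : EReal) := by simp only [hr, if_neg hj]
              rw [hrj, EReal.add_bot]
              exact bot_le
        · rcases xv_attain α d hd hα hi with heq | ⟨j, hj, hji, hle⟩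
          · have : m = 0 := by rw [hm, heq]; ring
            rw [this]
            exact le_max_left _ _
          · have hrj : r j = ((xv α d j : ℝ) : EReal) := by simp only [hr, if_pos hj]
            have h1 : ((m : ℝ) : EReal) ≤ ((α i j + xv α d j : ℝ) : EReal) :=
              EReal.coe_le_coe_iff.mpr (by rw [hm]; linarith)
            refine h1.trans (le_trans ?_ (le_max_right _ _))
            have h2 : ((α i j + xv α d j : ℝ) : EReal) = (α i j : EReal) + r j := by
              rw [hrj, EReal.coe_add]
            rw [h2]
            exact le_iSup (fun j : {j : Fin K // j ≠ i} => ((α i j.1 : EReal) + r j.1)) ⟨j, hji⟩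
      rw [hB, hri, ← EReal.coe_add, ← EReal.coe_sub]
      have : α i i + xv α d i - m = d i := by rw [hm]; ring
      rw [this]
      exact (max_eq_right (EReal.coe_nonneg.mpr hi.le)).symm
    · -- silent user
      have hdi : d i = 0 := by
        by_cases hiS : i ∈ S
        · exact hd.1 i hiS
        · have := (hd.2.1 i hiS).1
          rcases this.eq_or_lt with h | h
          · exact h.symm
          · exact absurd h hi
      have hri : r i = (⊥ : EReal) := by simp only [hr, if_neg hi]
      rw [hri, EReal.add_bot, EReal.bot_sub, hdi]
      simp [max_eq_left (bot_le : (⊥:EReal) ≤ 0)]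


lemma TIN_mem_PS (hα : ∀ i j, 0 ≤ α i j) (r : Fin K → EReal) (hr : ∀ i, r i ≤ 0)
    (heq : ∀ i, (d i : EReal) =
      max 0 (((α i i : EReal) + r i) -
        max 0 (⨆ j : {j : Fin K // j ≠ i}, ((α i j.1 : EReal) + r j.1)))) :
    d ∈ PS K α {i | d i = 0} := by
  classical
  have hBdef : ∀ i : Fin K, True := fun _ => trivial
  -- basic nonnegativity
  have hd0 : ∀ i, 0 ≤ d i := by
    intro i
    have := heq i
    have h0 : (0 : EReal) ≤ (d i : EReal) := this ▸ le_max_left _ _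
    exact_mod_cast h0
  -- key structural fact for active users
  have key : ∀ i, d i ≠ 0 → ∃ ρ b : ℝ, r i = (ρ : EReal) ∧ ρ ≤ 0 ∧
      max 0 (⨆ j : {j : Fin K // j ≠ i}, ((α i j.1 : EReal) + r j.1)) = (b : EReal)
      ∧ 0 ≤ b ∧ α i i + ρ = d i + b := by
    intro i hdi
    have hEQ := heq i
    set B : EReal := ⨆ j : {j : Fin K // j ≠ i}, ((α i j.1 : EReal) + r j.1) with hB
    have hX : ((α i i : EReal) + r i) - max 0 B = (d i : EReal) := by
      rcases max_choice 0 (((α i i : EReal) + r i) - max 0 B) with h | h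
      · rw [← hEQ] at h
        exact absurd ((by exact_mod_cast h.symm : (0:ℝ) = d i)).symm hdi
      · rw [← hEQ] at h
        exact h.symm
    have hB0 : (0 : EReal) ≤ max 0 B := le_max_left _ _
    have hBtop : max 0 B ≠ ⊤ := by
      intro h
      rw [h, EReal.sub_top] at hX
      exact EReal.coe_ne_bot _ hX.symm
    have hBbot : max 0 B ≠ ⊥ := by
      intro h
      rw [h, le_bot_iff] at hB0
      exact EReal.coe_ne_bot 0 (by exact_mod_cast hB0)
    set b := (max 0 B).toReal with hb
    have hbB : ((b : ℝ) : EReal) = max 0 B := EReal.coe_toReal hBtop hBbot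
    have hb0 : 0 ≤ b := EReal.coe_nonneg.mp (hbB ▸ hB0)
    have hsum : (α i i : EReal) + r i = ((d i + b : ℝ) : EReal) := by
      rw [EReal.coe_add]
      rw [← hbB] at hX
      calc (α i i : EReal) + r i = ((α i i : EReal) + r i) - (b : EReal) + (b : EReal) :=
            (EReal.sub_add_cancel).symm
        _ = (d i : EReal) + (b : EReal) := by rw [hX]
    have hrbot : r i ≠ ⊥ := by
      intro h
      rw [h, EReal.add_bot] at hsum
      exact EReal.coe_ne_bot _ hsum.symm
    have hrtop : r i ≠ ⊤ := ne_top_of_le_ne_top (by simp) (hr i)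
    set ρ := (r i).toReal with hρ
    have hρr : ((ρ : ℝ) : EReal) = r i := EReal.coe_toReal hrtop hrbot
    have hρ0 : ρ ≤ 0 := by
      have := hr i
      rw [← hρr] at this
      exact_mod_cast this
    refine ⟨ρ, b, hρr.symm, hρ0, hbB.symm, hb0, ?_⟩
    rw [← hρr, ← EReal.coe_add] at hsum
    exact_mod_cast hsum
  -- the interference bound
  have hFour : ∀ i j : Fin K, j ≠ i → (α i j : EReal) + r j ≤
      max 0 (⨆ j : {j : Fin K // j ≠ i}, ((α i j.1 : EReal) + r j.1)) := by
    intro i j hji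
    exact le_trans (le_iSup (fun j : {j : Fin K // j ≠ i} => ((α i j.1 : EReal) + r j.1))
      ⟨j, hji⟩) (le_max_right _ _)
  refine ⟨fun i hi => hi, ?_, ?_⟩
  · intro j _
    refine ⟨hd0 j, ?_⟩
    by_cases hdj : d j = 0
    · rw [hdj]; exact hα j j
    · obtain ⟨ρ, b, _, hρ0, _, hb0, hsum⟩ := key j hdj
      linarith
  · intro m hm i hinj hS
    have hdne : ∀ j : Fin m, d (i j) ≠ 0 := fun j => hS j
    choose ρ b hrρ hρ0 hBb hb0 hsum using fun j => key (i j) (hdne j)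
    have hstep : ∀ j : Fin m,
        d (i j) ≤ α (i j) (i j) + ρ j - α (i j) (i (cnext j)) - ρ (cnext j) := by
      intro j
      have hne : i (cnext j) ≠ i j := fun h => cnext_ne hm j (hinj h)
      have h4 := hFour (i j) (i (cnext j)) hne
      rw [hrρ (cnext j), hBb j, ← EReal.coe_add] at h4
      have h4' : α (i j) (i (cnext j)) + ρ (cnext j) ≤ b j := by exact_mod_cast h4
      have := hsum j
      linarith
    have hρsum : ∑ j : Fin m, ρ (cnext j) = ∑ j : Fin m, ρ j := by
      have := Equiv.sum_comp (⟨cnext, cprev, cprev_cnext, cnext_cprev⟩ : Equiv.Perm (Fin m)) ρ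
      simpa only [Equiv.coe_fn_mk] using this
    have hcross : ∑ j : Fin m, α (i j) (i (cnext j))
        = ∑ j : Fin m, α (i (cprev j)) (i j) := by
      have h := Equiv.sum_comp (⟨cnext, cprev, cprev_cnext, cnext_cprev⟩ : Equiv.Perm (Fin m))
        (fun j => α (i (cprev j)) (i j))
      simp only [Equiv.coe_fn_mk] at h
      rw [← h]
      refine Finset.sum_congr rfl fun j _ => ?_
      rw [cprev_cnext]
    calc ∑ j : Fin m, d (i j)
        ≤ ∑ j : Fin m, (α (i j) (i j) + ρ j - α (i j) (i (cnext j)) - ρ (cnext j)) :=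
          Finset.sum_le_sum fun j _ => hstep j
      _ = ∑ j : Fin m, (α (i j) (i j) - α (i (cprev j)) (i j)) := by
          simp only [Finset.sum_sub_distrib, Finset.sum_add_distrib]
          rw [hρsum, hcross]
          ring

end TINaux

theorem stmt_12 (K : ℕ) (hK : 1 ≤ K) (α : Fin K → Fin K → ℝ)
    (hα : ∀ i j, 0 ≤ α i j) :
    TINregion K α = ⋃ S : Set (Fin K), PS K α S := by
  ext d
  simp only [Set.mem_iUnion, TINregion, Set.mem_setOf_eq]
  constructor
  · rintro ⟨r, hr, heq⟩
    exact ⟨{i | d i = 0}, TINaux.TIN_mem_PS α d hα r hr heq⟩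
  · rintro ⟨S, hd⟩
    exact TINaux.PS_subset_TIN α d hα hd
end

section
/- Suppose α_{ij} ≥ 0 and the condition α_{ii} ≥ max_{j≠i} α_{ji} + max_{k≠i} α_{ik} holds for all i. Then for every subset S ⊆ {1,...,K}, the region P_S (defined with users in S silenced) is contained in P_∅ (the full polyhedral TIN region). Consequently the TIN region ⋃_S P_S equals P_∅. -/
/-- The TIN-optimality condition. -/
noncomputable def TINopt (K : ℕ) (α : Fin K → Fin K → ℝ) : Prop :=
  ∀ i, (⨆ j : {j : Fin K // j ≠ i}, α j.1 i) + (⨆ k : {k : Fin K // k ≠ i}, α i k.1)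
    ≤ α i i

lemma cprev_val {m : ℕ} (j : Fin m) (h0 : j.1 ≠ 0) : (cprev j).1 = j.1 - 1 := by
  show (j.1 + m - 1) % m = j.1 - 1
  have h : j.1 + m - 1 = (j.1 - 1) + m := by omega
  rw [h, Nat.add_mod_right, Nat.mod_eq_of_lt (by omega : j.1 - 1 < m)]

lemma cprev_val_zero {m : ℕ} (j : Fin m) (h0 : j.1 = 0) : (cprev j).1 = m - 1 := by
  show (j.1 + m - 1) % m = m - 1
  rw [h0]
  simp [Nat.mod_eq_of_lt (by omega : m - 1 < m)]

lemma cprev_eq_sub_one {n : ℕ} (j : Fin (n+1)) (hm : 2 ≤ n + 1) : cprev j = j - 1 := by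
  ext
  rw [Fin.sub_def]
  show (j.1 + (n+1) - 1) % (n+1) = _
  simp only []
  have h1 : ((1 : Fin (n+1))).1 = 1 := by
    rw [Fin.val_one']
    exact Nat.mod_eq_of_lt (by omega)
  rw [h1]
  congr 1
  omega

lemma alpha_bound {K : ℕ} {α : Fin K → Fin K → ℝ} (hcond : TINopt K α)
    {u s w : Fin K} (hu : u ≠ s) (hw : w ≠ s) : α u s + α s w ≤ α s s := by
  have b1 : BddAbove (Set.range fun j : {j : Fin K // j ≠ s} => α j.1 s) :=
    (Set.finite_range _).bddAbove
  have b2 : BddAbove (Set.range fun k : {k : Fin K // k ≠ s} => α s k.1) :=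
    (Set.finite_range _).bddAbove
  have h1 : α u s ≤ ⨆ j : {j : Fin K // j ≠ s}, α j.1 s := le_ciSup b1 ⟨u, hu⟩
  have h2 : α s w ≤ ⨆ k : {k : Fin K // k ≠ s}, α s k.1 := le_ciSup b2 ⟨w, hw⟩
  have := hcond s
  linarith

lemma key {K : ℕ} {α : Fin K → Fin K → ℝ} (hα : ∀ i j, 0 ≤ α i j) (hcond : TINopt K α)
    {S : Set (Fin K)} {d : Fin K → ℝ}
    (h1 : ∀ i ∈ S, d i = 0) (h2 : ∀ j, 0 ≤ d j ∧ d j ≤ α j j)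
    (h3 : ∀ m : ℕ, 2 ≤ m → ∀ i : Fin m → Fin K, Function.Injective i → (∀ j, i j ∉ S) →
      ∑ j : Fin m, d (i j) ≤ ∑ j : Fin m, (α (i j) (i j) - α (i (cprev j)) (i j))) :
    ∀ n (i : Fin (n+2) → Fin K), Function.Injective i →
      ∑ j : Fin (n+2), d (i j) ≤ ∑ j : Fin (n+2), (α (i j) (i j) - α (i (cprev j)) (i j)) := by
  intro n
  induction n with
  | zero =>
    intro i hi
    by_cases hall : ∀ j, i j ∉ S
    · exact h3 2 le_rfl i hi hall
    push_neg at hall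
    obtain ⟨p, hp⟩ := hall
    have c0 : cprev (0 : Fin 2) = 1 := by decide
    have c1 : cprev (1 : Fin 2) = 0 := by decide
    rw [Fin.sum_univ_two, Fin.sum_univ_two, c0, c1]
    have hne : i 1 ≠ i 0 := fun h => by simpa using hi h
    have hne' : i 0 ≠ i 1 := fun h => by simpa using hi h
    fin_cases p
    · have hd0 : d (i 0) = 0 := h1 _ hp
      have hd1 : d (i 1) ≤ α (i 1) (i 1) := (h2 _).2
      have hb := alpha_bound hcond hne hne
      linarith
    · have hd1 : d (i 1) = 0 := h1 _ hp
      have hd0 : d (i 0) ≤ α (i 0) (i 0) := (h2 _).2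
      have hb := alpha_bound hcond hne' hne'
      linarith
  | succ n ih =>
    intro i hi
    by_cases hall : ∀ j, i j ∉ S
    · exact h3 _ (by omega) i hi hall
    push_neg at hall
    obtain ⟨p, hp⟩ := hall
    set r : Fin (n+3) := p - Fin.last (n+2) with hr
    set i' : Fin (n+3) → Fin K := fun j => i (j + r) with hi'def
    have hi' : Function.Injective i' := fun a b h => by
      have := hi h
      exact add_right_cancel this
    have hlast : i' (Fin.last (n+2)) = i p := by
      show i (Fin.last (n+2) + (p - Fin.last (n+2))) = i p
      congr 1
      abel
    have sumL : ∑ j : Fin (n+3), d (i j) = ∑ j : Fin (n+3), d (i' j) :=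
      (Fintype.sum_equiv (Equiv.addRight r) (fun j => d (i' j)) (fun j => d (i j))
        (fun j => rfl)).symm
    have sumR : ∑ j : Fin (n+3), (α (i j) (i j) - α (i (cprev j)) (i j))
        = ∑ j : Fin (n+3), (α (i' j) (i' j) - α (i' (cprev j)) (i' j)) := by
      refine (Fintype.sum_equiv (Equiv.addRight r)
        (fun j => (α (i' j) (i' j) - α (i' (cprev j)) (i' j)))
        (fun j => (α (i j) (i j) - α (i (cprev j)) (i j))) (fun j => ?_)).symm
      show α (i' j) (i' j) - α (i' (cprev j)) (i' j)
        = α (i (j + r)) (i (j + r)) - α (i (cprev (j + r))) (i (j + r))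
      have hc : i' (cprev j) = i (cprev (j + r)) := by
        show i (cprev j + r) = i (cprev (j + r))
        congr 1
        rw [cprev_eq_sub_one _ (by omega), cprev_eq_sub_one _ (by omega)]
        abel
      rw [hc]
    rw [sumL, sumR]
    set i'' : Fin (n+2) → Fin K := fun j => i' j.castSucc with hi''def
    have hi'' : Function.Injective i'' := fun a b h =>
      Fin.castSucc_injective _ (hi' h)
    have ihh := ih i'' hi''
    set s : Fin K := i' (Fin.last (n+2)) with hs
    set u : Fin K := i'' (Fin.last (n+1)) with hu
    set w : Fin K := i'' 0 with hw
    have hsS : s ∈ S := by rw [hlast]; exact hp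
    -- cprev facts
    have cbig_zero : cprev (0 : Fin (n+3)) = Fin.last (n+2) := by
      ext
      rw [cprev_val_zero _ rfl]
      simp
    have csmall_zero : cprev (0 : Fin (n+2)) = Fin.last (n+1) := by
      ext
      rw [cprev_val_zero _ rfl]
      simp
    have cbig_last : cprev (Fin.last (n+2)) = (Fin.last (n+1)).castSucc := by
      ext
      rw [cprev_val _ (by simp)]
      simp
    have ccast : ∀ j : Fin (n+2), j ≠ 0 → cprev j.castSucc = (cprev j).castSucc := by
      intro j hj
      have hj' : j.1 ≠ 0 := fun h => hj (Fin.ext h)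
      ext
      rw [cprev_val _ (by simpa using hj'), Fin.coe_castSucc, Fin.coe_castSucc,
        cprev_val _ hj']
    -- split sums
    rw [Fin.sum_univ_castSucc (f := fun j => d (i' j)),
      Fin.sum_univ_castSucc (f := fun j => (α (i' j) (i' j) - α (i' (cprev j)) (i' j)))]
    have hds : d (i' (Fin.last (n+2))) = 0 := h1 _ hsS
    have hterm : ∀ j : Fin (n+2),
        (α (i' j.castSucc) (i' j.castSucc) - α (i' (cprev j.castSucc)) (i' j.castSucc))
        = (α (i'' j) (i'' j) - α (i'' (cprev j)) (i'' j))
          + (if j = 0 then α u w - α s w else 0) := by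
      intro j
      by_cases hj : j = 0
      · subst hj
        rw [if_pos rfl, Fin.castSucc_zero, cbig_zero, csmall_zero]
        show α (i'' 0) (i'' 0) - α s (i'' 0) = _
        rw [← hw, ← hu]
        ring
      · rw [if_neg hj, ccast j hj]
        show α (i'' j) (i'' j) - α (i'' (cprev j)) (i'' j) = _
        ring
    rw [Finset.sum_congr rfl (fun j _ => hterm j), Finset.sum_add_distrib]
    have hif : ∑ j : Fin (n+2), (if j = 0 then α u w - α s w else 0) = α u w - α s w := by
      simp
    rw [hif, cbig_last]
    have hlastterm : i' (Fin.last (n+1)).castSucc = u := rfl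
    rw [hlastterm]
    -- inequalities
    have hune : u ≠ s := fun h => by
      have := hi' h
      simp only [Fin.ext_iff, Fin.coe_castSucc, Fin.val_last] at this
      omega
    have hwne : w ≠ s := fun h => by
      have := hi' h
      simp only [Fin.ext_iff, Fin.coe_castSucc, Fin.val_last] at this
      simp at this
    have hb := alpha_bound hcond hune hwne
    have hαuw := hα u w
    rw [hds, ← hs]
    linarith

theorem stmt_14 (K : ℕ) (hK : 1 ≤ K) (α : Fin K → Fin K → ℝ)
    (hα : ∀ i j, 0 ≤ α i j) (hcond : TINopt K α) :
    (∀ S : Set (Fin K), PS K α S ⊆ PS K α ∅) ∧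
    (⋃ S : Set (Fin K), PS K α S) = PS K α ∅ := by
  have main : ∀ S : Set (Fin K), PS K α S ⊆ PS K α ∅ := by
    intro S d hd
    obtain ⟨h1, h2, h3⟩ := hd
    have h2' : ∀ j, 0 ≤ d j ∧ d j ≤ α j j := by
      intro j
      by_cases hj : j ∈ S
      · rw [h1 j hj]; exact ⟨le_rfl, hα j j⟩
      · exact h2 j hj
    refine ⟨fun i hi => absurd hi (Set.notMem_empty i), fun j _ => h2' j, ?_⟩
    intro m hm i hi _
    obtain ⟨n, rfl⟩ : ∃ n, m = n + 2 := ⟨m - 2, by omega⟩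
    exact key hα hcond h1 h2' h3 n i hi
  refine ⟨main, Set.Subset.antisymm (Set.iUnion_subset main) (Set.subset_iUnion _ ∅)⟩
end
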